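/- Let v and e be random vectors on a probability space with values in ℝ^m whose outer products vvᵀ, eeᵀ, veᵀ are entrywise integrable, let M be a real symmetric positive semidefinite m×m matrix, and let η > 0, δ > 0 and s > 0 be real numbers. If E[vvᵀ] ⪯ M, E[eeᵀ] ⪯ δ·M, and E[eeᵀ] ⪯ (δ/s²)·M in the Loewner order, then s²·E[eeᵀ] + s·E[veᵀ + evᵀ] ⪯ (s²δ + sη + δ/(sη))·M. -/

import Mathlib

open MeasureTheory Matrix

lemma psd_smul_aux {m : ℕ} {A : Matrix (Fin m) (Fin m) ℝ} (hA : A.PosSemidef)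
    {c : ℝ} (hc : 0 ≤ c) : (c • A).PosSemidef := by
  refine PosSemidef.of_dotProduct_mulVec_nonneg ?_ fun x => ?_
  · unfold Matrix.IsHermitian
    rw [conjTranspose_smul, hA.1.eq]
    simp
  · rw [smul_mulVec, dotProduct_smul]
    exact mul_nonneg hc (hA.dotProduct_mulVec_nonneg x)

lemma cov_psd {Ω : Type*} [MeasurableSpace Ω] (μ : Measure Ω)
    {m : ℕ} (w : Ω → Fin m → ℝ)
    (h : ∀ i j, Integrable (fun ω => w ω i * w ω j) μ) :
    (Matrix.of fun i j => ∫ ω, w ω i * w ω j ∂μ).PosSemidef := by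
  refine PosSemidef.of_dotProduct_mulVec_nonneg ?_ fun x => ?_
  · unfold Matrix.IsHermitian
    ext i j
    simp [conjTranspose_apply, mul_comm]
  · have hint : ∀ i, Integrable (fun ω => x i * w ω i * ∑ j, x j * w ω j) μ := by
      intro i
      have heq : (fun ω => x i * w ω i * ∑ j, x j * w ω j)
          = fun ω => ∑ j, (x i * x j) * (w ω i * w ω j) := by
        ext ω; rw [Finset.mul_sum]; congr 1; ext j; ring
      rw [heq]
      exact integrable_finset_sum _ fun j _ => (h i j).const_mul (x i * x j)
    have step : ∀ i, x i * ∑ j, (∫ ω, w ω i * w ω j ∂μ) * x j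
        = ∫ ω, x i * w ω i * (∑ j, x j * w ω j) ∂μ := by
      intro i
      have h1 : ∀ j, (∫ ω, w ω i * w ω j ∂μ) * x j = ∫ ω, (w ω i * w ω j) * x j ∂μ :=
        fun j => (integral_mul_const _ _).symm
      simp_rw [h1]
      rw [← integral_finset_sum _ (fun j _ => (h i j).mul_const (x j)),
        ← integral_const_mul]
      congr 1; ext ω
      rw [Finset.mul_sum, Finset.mul_sum]
      congr 1; ext j; ring
    have key : (star x) ⬝ᵥ ((Matrix.of fun i j => ∫ ω, w ω i * w ω j ∂μ) *ᵥ x)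
        = ∫ ω, (∑ i, x i * w ω i) ^ 2 ∂μ := by
      simp only [dotProduct, mulVec, dotProduct, Matrix.of_apply, star_trivial]
      simp_rw [step]
      rw [← integral_finset_sum _ (fun i _ => hint i)]
      congr 1; ext ω
      rw [sq, ← Finset.sum_mul]
    rw [key]
    exact integral_nonneg fun ω => sq_nonneg _

theorem decoding_error_covariance_bound
    {Ω : Type*} [MeasurableSpace Ω] (μ : Measure Ω) [IsProbabilityMeasure μ]
    {m : ℕ} (v e : Ω → Fin m → ℝ)
    (hvv : ∀ i j, Integrable (fun ω => v ω i * v ω j) μ)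
    (hee : ∀ i j, Integrable (fun ω => e ω i * e ω j) μ)
    (hve : ∀ i j, Integrable (fun ω => v ω i * e ω j) μ)
    (M : Matrix (Fin m) (Fin m) ℝ) (hM : M.PosSemidef)
    (η δ s : ℝ) (hη : 0 < η) (hδ : 0 < δ) (hs : 0 < s)
    (hv : (M - Matrix.of fun i j => ∫ ω, v ω i * v ω j ∂μ).PosSemidef)
    (he1 : (δ • M - Matrix.of fun i j => ∫ ω, e ω i * e ω j ∂μ).PosSemidef)
    (he2 : ((δ / s ^ 2) • M - Matrix.of fun i j => ∫ ω, e ω i * e ω j ∂μ).PosSemidef) :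
    ((s ^ 2 * δ + s * η + δ / (s * η)) • M -
      (s ^ 2 • (Matrix.of fun i j => ∫ ω, e ω i * e ω j ∂μ) +
        s • ((Matrix.of fun i j => ∫ ω, v ω i * e ω j ∂μ) +
          (Matrix.of fun i j => ∫ ω, v ω i * e ω j ∂μ)ᵀ))).PosSemidef := by
  set Vvv := Matrix.of fun i j => ∫ ω, v ω i * v ω j ∂μ with hVvv
  set Vee := Matrix.of fun i j => ∫ ω, e ω i * e ω j ∂μ with hVee
  set Vve := Matrix.of fun i j => ∫ ω, v ω i * e ω j ∂μ with hVve
  set w : Ω → Fin m → ℝ := fun ω i => η * v ω i - e ω i with hw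
  have hwint : ∀ i j, Integrable (fun ω => w ω i * w ω j) μ := by
    intro i j
    have heq : (fun ω => w ω i * w ω j) = fun ω =>
        (η ^ 2) * (v ω i * v ω j) + e ω i * e ω j
        - (η * (v ω i * e ω j) + η * (v ω j * e ω i)) := by
      ext ω; simp only [hw]; ring
    rw [heq]
    exact (((hvv i j).const_mul (η ^ 2)).add (hee i j)).sub
      (((hve i j).const_mul η).add ((hve j i).const_mul η))
  have hQ := cov_psd μ w hwint
  have hQeq : (Matrix.of fun i j => ∫ ω, w ω i * w ω j ∂μ)
      = (η ^ 2) • Vvv + Vee - η • (Vve + Vveᵀ) := by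
    ext i j
    simp only [Matrix.sub_apply, Matrix.add_apply, Matrix.smul_apply, Matrix.of_apply,
      Matrix.transpose_apply, smul_eq_mul, hVvv, hVee, hVve]
    have heq : (fun ω => w ω i * w ω j) = fun ω =>
        (η ^ 2) * (v ω i * v ω j) + e ω i * e ω j
        - (η * (v ω i * e ω j) + η * (v ω j * e ω i)) := by
      ext ω; simp only [hw]; ring
    rw [heq]
    have E0 : ∫ ω, (η ^ 2 * (v ω i * v ω j) + e ω i * e ω j
          - (η * (v ω i * e ω j) + η * (v ω j * e ω i))) ∂μ
        = (∫ ω, (η ^ 2 * (v ω i * v ω j) + e ω i * e ω j) ∂μ)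
          - ∫ ω, (η * (v ω i * e ω j) + η * (v ω j * e ω i)) ∂μ :=
      integral_sub (((hvv i j).const_mul (η ^ 2)).add (hee i j))
        (((hve i j).const_mul η).add ((hve j i).const_mul η))
    have E1 : ∫ ω, (η ^ 2 * (v ω i * v ω j) + e ω i * e ω j) ∂μ
        = (∫ ω, η ^ 2 * (v ω i * v ω j) ∂μ) + ∫ ω, e ω i * e ω j ∂μ :=
      integral_add ((hvv i j).const_mul (η ^ 2)) (hee i j)
    have E2 : ∫ ω, (η * (v ω i * e ω j) + η * (v ω j * e ω i)) ∂μ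
        = (∫ ω, η * (v ω i * e ω j) ∂μ) + ∫ ω, η * (v ω j * e ω i) ∂μ :=
      integral_add ((hve i j).const_mul η) ((hve j i).const_mul η)
    rw [E0, E1, E2, integral_const_mul, integral_const_mul, integral_const_mul]
    ring
  have key : (s ^ 2 * δ + s * η + δ / (s * η)) • M -
      (s ^ 2 • Vee + s • (Vve + Vveᵀ))
      = s ^ 2 • (δ • M - Vee) + (s * η) • (M - Vvv)
        + (s / η) • ((δ / s ^ 2) • M - Vee)
        + (s / η) • ((η ^ 2) • Vvv + Vee - η • (Vve + Vveᵀ)) := by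
    ext i j
    simp only [Matrix.sub_apply, Matrix.add_apply, Matrix.smul_apply, smul_eq_mul,
      Matrix.transpose_apply]
    field_simp
    ring
  rw [key, ← hQeq]
  exact (((psd_smul_aux he1 (by positivity)).add (psd_smul_aux hv (by positivity))).add
    (psd_smul_aux he2 (by positivity))).add (psd_smul_aux hQ (by positivity))
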